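/- Let d ≥ 1, let S ⊆ {1,…,d} be nonempty, and for each i ∈ S let h_i = 2^{−l_i} with l_i ∈ ℕ. Let I^{(S)} = {x ∈ [0,1]^d : x_i/h_i ∈ ℤ for all i ∈ S}. Suppose f : I^{(S)} → ℝ is bounded and u : I^{(S)} → ℝ is continuous on I^{(S)}, has continuous second partial derivatives ∂_i²u for i ∉ S at all points of I^{(S)} with all coordinates in (0,1), vanishes at every point of I^{(S)} having some coordinate equal to 0 or 1, and satisfies the semi-discrete equation Σ_{i∈S} (u(x+h_i e_i) − 2u(x) + u(x−h_i e_i))/h_i² + Σ_{i∉S} ∂_i²u(x) = f(x) at every x ∈ I^{(S)} with all coordinates in (0,1). Then sup_{x∈I^{(S)}} |u(x)| ≤ (1/8)·sup |f|. -/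
import Mathlib


/-- Partial derivative of `u` in direction `i` (one-sided within `[0,1]` at the
boundary): `∂ᵢu(x) = d/dt u(x₁,…,t,…,x_d)|_{t = xᵢ}` taken within `[0,1]`. -/
noncomputable def pd (d : ℕ) (i : Fin d) (u : (Fin d → ℝ) → ℝ) : (Fin d → ℝ) → ℝ :=
  fun x => derivWithin (fun t => u (Function.update x i t)) (Set.Icc 0 1) (x i)

/-- Mixed partial derivative `D^α u = ∂₁^{α₁} ⋯ ∂_d^{α_d} u`. -/
noncomputable def mderiv (d : ℕ) (α : Fin d → ℕ) (u : (Fin d → ℝ) → ℝ) :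
    (Fin d → ℝ) → ℝ :=
  (List.finRange d).foldr (fun i v => (pd d i)^[α i] v) u

/-- The closed unit cube `[0,1]^d`. -/
def unitCube (d : ℕ) : Set (Fin d → ℝ) := Set.Icc 0 1

/-- The open unit cube `(0,1)^d`. -/
def openCube (d : ℕ) : Set (Fin d → ℝ) := Set.pi Set.univ fun _ => Set.Ioo (0 : ℝ) 1

/-- The boundary `∂[0,1]^d`. -/
def cubeBdry (d : ℕ) : Set (Fin d → ℝ) := {x ∈ unitCube d | ∃ i, x i = 0 ∨ x i = 1}

/-- All mixed partial derivatives `D^β f`, `β ≤ α`, exist on `s` (each step of the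
iterated differentiation is differentiable within `[0,1]` in its direction). -/
def HasDerivsOn (d : ℕ) (α : Fin d → ℕ) (f : (Fin d → ℝ) → ℝ)
    (s : Set (Fin d → ℝ)) : Prop :=
  ∀ β : Fin d → ℕ, (∀ i, β i ≤ α i) → ∀ i : Fin d, β i < α i → ∀ x ∈ s,
    DifferentiableWithinAt ℝ (fun t => mderiv d β f (Function.update x i t))
      (Set.Icc 0 1) (x i)

/-- `u ∈ X_k^d`: all mixed derivatives `D^α u`, `α ∈ {0,…,k}^d`, exist, are
continuous on `[0,1]^d` and vanish on the boundary. -/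
def MemX (d k : ℕ) (u : (Fin d → ℝ) → ℝ) : Prop :=
  HasDerivsOn d (fun _ => k) u (unitCube d) ∧
  ∀ α : Fin d → ℕ, (∀ i, α i ≤ k) →
    ContinuousOn (mderiv d α u) (unitCube d) ∧
    ∀ x ∈ cubeBdry d, mderiv d α u x = 0

/-- `u ∈ X_k^d(K)`: additionally all these derivatives are bounded by `K`. -/
def MemXb (d k : ℕ) (K : ℝ) (u : (Fin d → ℝ) → ℝ) : Prop :=
  MemX d k u ∧
  ∀ α : Fin d → ℕ, (∀ i, α i ≤ k) → ∀ x ∈ unitCube d, |mderiv d α u x| ≤ K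

/-- Mesh size `h_k = 2^{-lvl_k}` attached to a level vector. -/
noncomputable def hmesh (d : ℕ) (lvl : Fin d → ℕ) (k : Fin d) : ℝ := ((2 : ℝ) ^ lvl k)⁻¹

/-- The grid point with index `i` on the grid of level `lvl`. -/
noncomputable def gridpt (d : ℕ) (lvl : Fin d → ℕ) (i : Fin d → ℕ) : Fin d → ℝ :=
  fun k => (i k : ℝ) * hmesh d lvl k

/-- Valid grid indices: `0 ≤ i_k ≤ 2^{lvl_k}`. -/
def IsGridIdx (d : ℕ) (lvl : Fin d → ℕ) (i : Fin d → ℕ) : Prop := ∀ k, i k ≤ 2 ^ lvl k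

/-- The hyperplane set `I^{(J)} = {x ∈ [0,1]^d : x_j/h_j ∈ ℤ for j ∈ J}`. -/
def Iplane (d : ℕ) (J : Finset (Fin d)) (lvl : Fin d → ℕ) : Set (Fin d → ℝ) :=
  {x ∈ unitCube d | ∀ j ∈ J, ∃ m : ℤ, x j = (m : ℝ) * hmesh d lvl j}

/-- `U` is the central finite difference solution of the Poisson problem `Δu = f`
with zero Dirichlet data on the grid of level `lvl`. -/
def IsFDPoisson (d : ℕ) (lvl : Fin d → ℕ) (f : (Fin d → ℝ) → ℝ)
    (U : (Fin d → ℕ) → ℝ) : Prop :=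
  (∀ i : Fin d → ℕ, IsGridIdx d lvl i → (∃ k, i k = 0 ∨ i k = 2 ^ lvl k) → U i = 0) ∧
  (∀ i : Fin d → ℕ, (∀ k, 1 ≤ i k ∧ i k < 2 ^ lvl k) →
    ∑ k, (U (Function.update i k (i k + 1)) - 2 * U i + U (Function.update i k (i k - 1)))
        / hmesh d lvl k ^ 2
      = f (gridpt d lvl i))

/-- `U` is the upwind (implicit Euler) solution of the advection equation
`Σᵢ ∂ᵢu = 0` on the grid of level `lvl`, with inflow data given by `u`. -/
def IsUpwindSol (d : ℕ) (lvl : Fin d → ℕ) (u : (Fin d → ℝ) → ℝ)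
    (U : (Fin d → ℕ) → ℝ) : Prop :=
  (∀ i : Fin d → ℕ, IsGridIdx d lvl i → (∃ k, i k = 0) → U i = u (gridpt d lvl i)) ∧
  (∀ i : Fin d → ℕ, IsGridIdx d lvl i → (∀ k, 1 ≤ i k) →
    ∑ k, (U i - U (Function.update i k (i k - 1))) / hmesh d lvl k = 0)

/-- `g` is the multilinear interpolant of the grid function `U` on the grid of
level `lvl`: it agrees with `U` at all grid points and is a polynomial of degree
at most `1` in each variable on each grid cell. -/
def IsInterp (d : ℕ) (lvl : Fin d → ℕ) (U : (Fin d → ℕ) → ℝ)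
    (g : (Fin d → ℝ) → ℝ) : Prop :=
  (∀ i : Fin d → ℕ, IsGridIdx d lvl i → g (gridpt d lvl i) = U i) ∧
  (∀ j : Fin d → ℕ, (∀ k, j k < 2 ^ lvl k) →
    ∃ c : Finset (Fin d) → ℝ, ∀ x : Fin d → ℝ,
      (∀ k, (j k : ℝ) * hmesh d lvl k ≤ x k ∧ x k ≤ ((j k : ℝ) + 1) * hmesh d lvl k) →
      g x = ∑ T : Finset (Fin d), c T * ∏ k ∈ T, x k)

/-- The domain `{x : x ± h e_k ∈ [0,1]^d}` of the truncation error terms. -/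
def diffDom (d : ℕ) (k : Fin d) (h : ℝ) : Set (Fin d → ℝ) :=
  {x | Function.update x k (x k + h) ∈ unitCube d ∧
       Function.update x k (x k - h) ∈ unitCube d}

section Aux
open Set Filter Topology

lemma hmesh_pos (d : ℕ) (lvl : Fin d → ℕ) (k : Fin d) : 0 < hmesh d lvl k := by
  unfold hmesh; positivity

lemma mem_unitCube_iff {d : ℕ} {x : Fin d → ℝ} :
    x ∈ unitCube d ↔ ∀ k, 0 ≤ x k ∧ x k ≤ 1 := by
  constructor
  · intro h k; exact ⟨h.1 k, h.2 k⟩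
  · intro h; exact ⟨fun k => (h k).1, fun k => (h k).2⟩

lemma zero_mem_Iplane (d : ℕ) (S : Finset (Fin d)) (lvl : Fin d → ℕ) :
    (0 : Fin d → ℝ) ∈ Iplane d S lvl :=
  ⟨mem_unitCube_iff.mpr (fun _ => by norm_num), fun j _ => ⟨0, by simp⟩⟩

lemma isCompact_Iplane (d : ℕ) (S : Finset (Fin d)) (lvl : Fin d → ℕ) :
    IsCompact (Iplane d S lvl) := by
  have hcl : IsClosed (Iplane d S lvl) := by
    have heq : Iplane d S lvl = unitCube d ∩ ⋂ j ∈ S,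
        (fun x : Fin d → ℝ => x j / hmesh d lvl j) ⁻¹' (Set.range ((↑) : ℤ → ℝ)) := by
      ext x
      simp only [Iplane, Set.mem_setOf_eq, Set.mem_inter_iff, Set.mem_iInter,
        Set.mem_preimage, Set.mem_range]
      constructor
      · rintro ⟨hx, h⟩
        refine ⟨hx, fun j hj => ?_⟩
        obtain ⟨m, hm⟩ := h j hj
        have hne : hmesh d lvl j ≠ 0 := ne_of_gt (hmesh_pos d lvl j)
        exact ⟨m, by rw [hm, mul_div_assoc, div_self hne, mul_one]⟩
      · rintro ⟨hx, h⟩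
        refine ⟨hx, fun j hj => ?_⟩
        obtain ⟨m, hm⟩ := h j hj
        have hne : hmesh d lvl j ≠ 0 := ne_of_gt (hmesh_pos d lvl j)
        exact ⟨m, ((eq_div_iff hne).mp hm).symm⟩
    rw [heq]
    refine isClosed_Icc.inter (isClosed_biInter fun j hj => ?_)
    exact IsClosed.preimage ((continuous_apply j).div_const _)
      Int.isClosedEmbedding_coe_real.isClosed_range
  exact IsCompact.of_isClosed_subset isCompact_Icc hcl (fun x hx => hx.1)

lemma update_mem_Iplane {d : ℕ} {S : Finset (Fin d)} {lvl : Fin d → ℕ} {x : Fin d → ℝ}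
    (hx : x ∈ Iplane d S lvl) (i : Fin d) (t : ℝ) (h0 : 0 ≤ t) (h1 : t ≤ 1)
    (hdiv : i ∈ S → ∃ m : ℤ, t = (m : ℝ) * hmesh d lvl i) :
    Function.update x i t ∈ Iplane d S lvl := by
  obtain ⟨hxc, hxd⟩ := hx
  refine ⟨mem_unitCube_iff.mpr fun k => ?_, fun j' hj' => ?_⟩
  · rcases eq_or_ne k i with rfl | hk
    · simp [h0, h1]
    · rw [Function.update_of_ne hk]
      exact (mem_unitCube_iff.mp hxc) k
  · rcases eq_or_ne j' i with rfl | hk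
    · obtain ⟨m, hm⟩ := hdiv hj'
      exact ⟨m, by simpa using hm⟩
    · rw [Function.update_of_ne hk]
      exact hxd j' hj'

lemma second_deriv_nonneg_at_min (G H : ℝ → ℝ) (t₀ : ℝ) (ht₀ : t₀ ∈ Set.Ioo (0:ℝ) 1)
    (hGdiff : ∀ t ∈ Set.Ioo (0:ℝ) 1, DifferentiableAt ℝ G t)
    (hGH : ∀ t ∈ Set.Ioo (0:ℝ) 1, deriv G t = H t)
    (hHdiff : DifferentiableAt ℝ H t₀)
    (hmin : ∀ t ∈ Set.Icc (0:ℝ) 1, G t₀ ≤ G t) :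
    0 ≤ deriv H t₀ := by
  have hnhds : ∀ t ∈ Set.Ioo (0:ℝ) 1, Set.Icc (0:ℝ) 1 ∈ 𝓝 t :=
    fun t ht => Icc_mem_nhds ht.1 ht.2
  have hlocmin : IsLocalMin G t₀ := by
    filter_upwards [hnhds t₀ ht₀] with t ht using hmin t ht
  have hH0 : H t₀ = 0 := by rw [← hGH t₀ ht₀]; exact hlocmin.deriv_eq_zero
  by_contra hK
  push_neg at hK
  have hKlt : deriv H t₀ < 0 := hK
  have hKd : HasDerivAt H (deriv H t₀) t₀ := hHdiff.hasDerivAt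
  have hslope := hasDerivAt_iff_tendsto_slope.mp hKd
  have h1 : Filter.Tendsto (slope H t₀) (nhdsWithin t₀ (Set.Ioi t₀)) (𝓝 (deriv H t₀)) :=
    hslope.mono_left (nhdsWithin_mono _ (fun t ht => Set.mem_compl_singleton_iff.mpr (ne_of_gt ht)))
  have hev : ∀ᶠ t in nhdsWithin t₀ (Set.Ioi t₀), slope H t₀ t < 0 ∧ t < 1 :=
    (h1.eventually_lt_const hKlt).and ((eventually_lt_nhds ht₀.2).filter_mono nhdsWithin_le_nhds)
  obtain ⟨t₁, ht₁, hsub⟩ := mem_nhdsGT_iff_exists_Ioo_subset.mp hev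
  rw [Set.mem_Ioi] at ht₁
  set t₂ := (t₀ + t₁)/2 with ht₂def
  have ht₀t₂ : t₀ < t₂ := by rw [ht₂def]; linarith
  have ht₂t₁ : t₂ < t₁ := by rw [ht₂def]; linarith
  have ht₂mem := hsub ⟨ht₀t₂, ht₂t₁⟩
  have ht₂1 : t₂ < 1 := ht₂mem.2
  have hIccsub : Set.Icc t₀ t₂ ⊆ Set.Ioo (0:ℝ) 1 :=
    fun t ht => ⟨lt_of_lt_of_le ht₀.1 ht.1, lt_of_le_of_lt ht.2 ht₂1⟩
  have hanti : StrictAntiOn G (Set.Icc t₀ t₂) := by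
    apply strictAntiOn_of_deriv_neg (convex_Icc _ _)
    · exact fun t ht => ((hGdiff t (hIccsub ht)).continuousAt).continuousWithinAt
    · intro t ht
      rw [interior_Icc] at ht
      rw [hGH t (hIccsub (Set.Ioo_subset_Icc_self ht))]
      have hs := (hsub ⟨ht.1, lt_trans ht.2 ht₂t₁⟩).1
      rw [slope_def_field, hH0, sub_zero] at hs
      have hpos : 0 < t - t₀ := by linarith [ht.1]
      by_contra hge
      push_neg at hge
      exact absurd hs (not_lt.mpr (div_nonneg hge (le_of_lt hpos)))
  have hlt : G t₂ < G t₀ :=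
    hanti (Set.left_mem_Icc.mpr (le_of_lt ht₀t₂)) (Set.right_mem_Icc.mpr (le_of_lt ht₀t₂)) ht₀t₂
  have hle : G t₀ ≤ G t₂ := hmin t₂ ⟨by linarith [ht₀.1], le_of_lt ht₂1⟩
  linarith

lemma key_lemma (d : ℕ) (S : Finset (Fin d)) (lvl : Fin d → ℕ)
    (f u : (Fin d → ℝ) → ℝ) (M : ℝ)
    (hf : ∀ x ∈ Iplane d S lvl, |f x| ≤ M)
    (hcont : ContinuousOn u (Iplane d S lvl))
    (hdiff : ∀ i : Fin d, i ∉ S → ∀ x ∈ Iplane d S lvl, (∀ j, 0 < x j ∧ x j < 1) →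
      DifferentiableWithinAt ℝ (fun t => u (Function.update x i t)) (Set.Icc 0 1) (x i) ∧
      DifferentiableWithinAt ℝ (fun t => pd d i u (Function.update x i t))
        (Set.Icc 0 1) (x i))
    (hzero : ∀ x ∈ Iplane d S lvl, (∃ i, x i = 0 ∨ x i = 1) → u x = 0)
    (heq : ∀ x ∈ Iplane d S lvl, (∀ j, 0 < x j ∧ x j < 1) →
      (∑ i ∈ S,
          (u (Function.update x i (x i + hmesh d lvl i)) - 2 * u x +
              u (Function.update x i (x i - hmesh d lvl i))) / hmesh d lvl i ^ 2)
        + (∑ i ∈ Sᶜ, pd d i (pd d i u) x) = f x)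
    (j : Fin d) (hjS : j ∈ S) (σ : ℝ) (hσ : σ = 1 ∨ σ = -1)
    (c : ℝ) (hc : M < c) :
    ∀ x ∈ Iplane d S lvl, 0 ≤ σ * u x + c * (x j * (1 - x j) / 2) := by
  have hM0 : 0 ≤ M := le_trans (abs_nonneg _) (hf 0 (zero_mem_Iplane d S lvl))
  have hc0 : 0 < c := lt_of_le_of_lt hM0 hc
  set v : (Fin d → ℝ) → ℝ := fun x => σ * u x + c * (x j * (1 - x j) / 2) with hv
  have hvcont : ContinuousOn v (Iplane d S lvl) := by
    apply ContinuousOn.add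
    · exact continuousOn_const.mul hcont
    · exact continuousOn_const.mul (Continuous.continuousOn (by fun_prop))
  obtain ⟨x₀, hx₀, hmin⟩ :=
    (isCompact_Iplane d S lvl).exists_isMinOn ⟨0, zero_mem_Iplane d S lvl⟩ hvcont
  suffices h0 : 0 ≤ v x₀ by
    intro x hx
    exact le_trans h0 (hmin hx)
  by_contra hneg
  push_neg at hneg
  -- all coordinates of x₀ are interior
  have hint : ∀ k, 0 < x₀ k ∧ x₀ k < 1 := by
    intro k
    obtain ⟨hk0, hk1⟩ := mem_unitCube_iff.mp hx₀.1 k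
    by_contra hk
    have hb : x₀ k = 0 ∨ x₀ k = 1 := by
      push_neg at hk
      rcases eq_or_lt_of_le hk0 with h | h
      · exact Or.inl h.symm
      · exact Or.inr (le_antisymm hk1 (hk h))
    have hu0 : u x₀ = 0 := hzero x₀ hx₀ ⟨k, hb⟩
    obtain ⟨hj0, hj1⟩ := mem_unitCube_iff.mp hx₀.1 j
    have : 0 ≤ v x₀ := by
      rw [hv]
      simp only [hu0, mul_zero, zero_add]
      have : 0 ≤ x₀ j * (1 - x₀ j) / 2 := by nlinarith
      positivity
    linarith
  have heqx := heq x₀ hx₀ hint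
  -- discrete directions
  have hdisc : ∀ i ∈ S, (if i = j then c else 0) ≤
      σ * ((u (Function.update x₀ i (x₀ i + hmesh d lvl i)) - 2 * u x₀ +
        u (Function.update x₀ i (x₀ i - hmesh d lvl i))) / hmesh d lvl i ^ 2) := by
    intro i hi
    have hhpos : 0 < hmesh d lvl i := hmesh_pos d lvl i
    obtain ⟨m, hm⟩ := hx₀.2 i hi
    have h2l : (2:ℝ) ^ lvl i * hmesh d lvl i = 1 := by
      unfold hmesh; field_simp
    have hm0 : 0 < (m:ℝ) := by
      have := (hint i).1
      rw [hm] at this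
      nlinarith
    have hmlt : (m:ℝ) < 2 ^ lvl i := by
      have := (hint i).2
      rw [hm] at this
      nlinarith
    -- memberships of the two neighbours
    have hp : Function.update x₀ i (x₀ i + hmesh d lvl i) ∈ Iplane d S lvl := by
      apply update_mem_Iplane hx₀ i _ (by nlinarith [(hint i).1]) ?_ ?_
      · -- x₀ i + h ≤ 1
        have hmle : (m:ℝ) + 1 ≤ 2 ^ lvl i := by
          have : m < 2 ^ lvl i := by exact_mod_cast hmlt
          exact_mod_cast this
        rw [hm]
        nlinarith
      · intro _
        exact ⟨m + 1, by rw [hm]; push_cast; ring⟩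
    have hq : Function.update x₀ i (x₀ i - hmesh d lvl i) ∈ Iplane d S lvl := by
      apply update_mem_Iplane hx₀ i _ ?_ ?_ ?_
      · have hm1 : (1:ℝ) ≤ (m:ℝ) := by
          have : (0:ℤ) < m := by exact_mod_cast hm0
          exact_mod_cast this
        rw [hm]
        nlinarith
      · nlinarith [(hint i).2]
      · intro _
        exact ⟨m - 1, by rw [hm]; push_cast; ring⟩
    have h1 := hmin hp
    have h2 := hmin hq
    rcases eq_or_ne i j with rfl | hij
    · simp only [hv, Set.mem_setOf_eq, Function.update_self] at h1 h2
      rw [if_pos rfl]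
      have key : c * hmesh d lvl i ^ 2 ≤
          σ * (u (Function.update x₀ i (x₀ i + hmesh d lvl i)) - 2 * u x₀ +
            u (Function.update x₀ i (x₀ i - hmesh d lvl i))) := by nlinarith [h1, h2]
      calc c = c * hmesh d lvl i ^ 2 / hmesh d lvl i ^ 2 := by field_simp
        _ ≤ σ * (u (Function.update x₀ i (x₀ i + hmesh d lvl i)) - 2 * u x₀ +
            u (Function.update x₀ i (x₀ i - hmesh d lvl i))) / hmesh d lvl i ^ 2 := by
              apply div_le_div_of_nonneg_right ?_ (by positivity)
              exact key
        _ = _ := by ring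
    · simp only [hv, Set.mem_setOf_eq, Function.update_of_ne (Ne.symm hij)] at h1 h2
      rw [if_neg hij]
      have key : 0 ≤ σ * (u (Function.update x₀ i (x₀ i + hmesh d lvl i)) - 2 * u x₀ +
            u (Function.update x₀ i (x₀ i - hmesh d lvl i))) := by linarith
      have := div_nonneg key (le_of_lt (pow_pos hhpos 2))
      linarith [this, (by ring : σ * (u (Function.update x₀ i (x₀ i + hmesh d lvl i)) - 2 * u x₀ +
            u (Function.update x₀ i (x₀ i - hmesh d lvl i))) / hmesh d lvl i ^ 2 =
            σ * ((u (Function.update x₀ i (x₀ i + hmesh d lvl i)) - 2 * u x₀ +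
            u (Function.update x₀ i (x₀ i - hmesh d lvl i))) / hmesh d lvl i ^ 2))]
  -- continuous directions
  have hcts : ∀ i ∈ Sᶜ, 0 ≤ σ * pd d i (pd d i u) x₀ := by
    intro i hiC
    have hiS : i ∉ S := Finset.mem_compl.mp hiC
    have hij : i ≠ j := fun h => hiS (h ▸ hjS)
    have ht₀I : x₀ i ∈ Set.Ioo (0:ℝ) 1 := ⟨(hint i).1, (hint i).2⟩
    have hupd_mem : ∀ t ∈ Set.Icc (0:ℝ) 1, Function.update x₀ i t ∈ Iplane d S lvl :=
      fun t ht => update_mem_Iplane hx₀ i t ht.1 ht.2 (fun h => absurd h hiS)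
    have hupd_int : ∀ t ∈ Set.Ioo (0:ℝ) 1, ∀ k,
        0 < Function.update x₀ i t k ∧ Function.update x₀ i t k < 1 := by
      intro t ht k
      rcases eq_or_ne k i with rfl | hk
      · simpa using ht
      · rw [Function.update_of_ne hk]; exact hint k
    have hnhds : ∀ t ∈ Set.Ioo (0:ℝ) 1, Set.Icc (0:ℝ) 1 ∈ 𝓝 t :=
      fun t ht => Icc_mem_nhds ht.1 ht.2
    -- inner derivative facts
    have hud : ∀ t ∈ Set.Ioo (0:ℝ) 1,
        DifferentiableAt ℝ (fun s => u (Function.update x₀ i s)) t := by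
      intro t ht
      have := (hdiff i hiS _ (hupd_mem t (Set.Ioo_subset_Icc_self ht)) (hupd_int t ht)).1
      simp only [Function.update_idem, Function.update_self] at this
      exact this.differentiableAt (hnhds t ht)
    have hpdd : ∀ t ∈ Set.Ioo (0:ℝ) 1,
        DifferentiableAt ℝ (fun s => pd d i u (Function.update x₀ i s)) t := by
      intro t ht
      have := (hdiff i hiS _ (hupd_mem t (Set.Ioo_subset_Icc_self ht)) (hupd_int t ht)).2
      simp only [Function.update_idem, Function.update_self] at this
      exact this.differentiableAt (hnhds t ht)
    have hpdval : ∀ t ∈ Set.Ioo (0:ℝ) 1,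
        pd d i u (Function.update x₀ i t) = deriv (fun s => u (Function.update x₀ i s)) t := by
      intro t ht
      simp only [pd, Function.update_idem, Function.update_self]
      exact derivWithin_of_mem_nhds (hnhds t ht)
    -- apply second_deriv_nonneg_at_min with sign folded in
    have hkey := second_deriv_nonneg_at_min
      (fun t => σ * u (Function.update x₀ i t))
      (fun t => σ * pd d i u (Function.update x₀ i t))
      (x₀ i) ht₀I
      (fun t ht => ((hud t ht).const_mul σ))
      (fun t ht => by
        show deriv (fun s => σ * u (Function.update x₀ i s)) t
          = σ * pd d i u (Function.update x₀ i t)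
        rw [deriv_const_mul σ (hud t ht), hpdval t ht])
      ((hpdd (x₀ i) ht₀I).const_mul σ)
      (fun t ht => by
        have h1 := hmin (hupd_mem t ht)
        simp only [hv, Set.mem_setOf_eq, Function.update_of_ne (Ne.symm hij)] at h1
        show σ * u (Function.update x₀ i (x₀ i)) ≤ σ * u (Function.update x₀ i t)
        rw [Function.update_eq_self]
        linarith)
    rw [deriv_const_mul σ (hpdd (x₀ i) ht₀I)] at hkey
    have hpd2 : pd d i (pd d i u) x₀
        = deriv (fun s => pd d i u (Function.update x₀ i s)) (x₀ i) := by
      simp only [pd]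
      exact derivWithin_of_mem_nhds (hnhds (x₀ i) ht₀I)
    rw [hpd2]
    exact hkey
  -- sum up
  have e1 : σ * f x₀ =
      (∑ i ∈ S, σ * ((u (Function.update x₀ i (x₀ i + hmesh d lvl i)) - 2 * u x₀ +
        u (Function.update x₀ i (x₀ i - hmesh d lvl i))) / hmesh d lvl i ^ 2)) +
      (∑ i ∈ Sᶜ, σ * pd d i (pd d i u) x₀) := by
    rw [← Finset.mul_sum, ← Finset.mul_sum, ← mul_add, heqx]
  have h1 : (∑ i ∈ S, (if i = j then c else 0)) ≤
      ∑ i ∈ S, σ * ((u (Function.update x₀ i (x₀ i + hmesh d lvl i)) - 2 * u x₀ +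
        u (Function.update x₀ i (x₀ i - hmesh d lvl i))) / hmesh d lvl i ^ 2) :=
    Finset.sum_le_sum hdisc
  have h2 : (0:ℝ) ≤ ∑ i ∈ Sᶜ, σ * pd d i (pd d i u) x₀ := Finset.sum_nonneg hcts
  have h3 : (∑ i ∈ S, (if i = j then c else 0)) = c := by
    rw [Finset.sum_ite_eq' S j (fun _ => c)]
    simp [hjS]
  obtain ⟨hfl, hfr⟩ := abs_le.mp (hf x₀ hx₀)
  rcases hσ with rfl | rfl <;> nlinarith [e1, h1, h2, h3]

end Aux

/-- Semi-discrete maximum principle (Lemma `stability`, part 2): the solution of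
the semi-discrete Poisson problem on the hyperplane set `I^{(S)}` is bounded by
`(1/8)·sup|f|`. -/
theorem semidiscrete_sup_bound (d : ℕ) (hd : 1 ≤ d)
    (S : Finset (Fin d)) (hS : S.Nonempty) (lvl : Fin d → ℕ)
    (f u : (Fin d → ℝ) → ℝ) (M : ℝ)
    (hf : ∀ x ∈ Iplane d S lvl, |f x| ≤ M)
    (hcont : ContinuousOn u (Iplane d S lvl))
    (hdiff : ∀ i : Fin d, i ∉ S → ∀ x ∈ Iplane d S lvl, (∀ j, 0 < x j ∧ x j < 1) →
      DifferentiableWithinAt ℝ (fun t => u (Function.update x i t)) (Set.Icc 0 1) (x i) ∧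
      DifferentiableWithinAt ℝ (fun t => pd d i u (Function.update x i t))
        (Set.Icc 0 1) (x i))
    (hcont2 : ∀ i : Fin d, i ∉ S →
      ContinuousOn (pd d i (pd d i u)) {x ∈ Iplane d S lvl | ∀ j, 0 < x j ∧ x j < 1})
    (hzero : ∀ x ∈ Iplane d S lvl, (∃ i, x i = 0 ∨ x i = 1) → u x = 0)
    (heq : ∀ x ∈ Iplane d S lvl, (∀ j, 0 < x j ∧ x j < 1) →
      (∑ i ∈ S,
          (u (Function.update x i (x i + hmesh d lvl i)) - 2 * u x +
              u (Function.update x i (x i - hmesh d lvl i))) / hmesh d lvl i ^ 2)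
        + (∑ i ∈ Sᶜ, pd d i (pd d i u) x) = f x) :
    ∀ x ∈ Iplane d S lvl, |u x| ≤ (1 / 8) * M := by
  obtain ⟨j, hjS⟩ := hS
  intro x hx
  have hM0 : 0 ≤ M := le_trans (abs_nonneg _) (hf 0 (zero_mem_Iplane d S lvl))
  obtain ⟨hxj0, hxj1⟩ := mem_unitCube_iff.mp hx.1 j
  have hwle : x j * (1 - x j) / 2 ≤ 1/8 := by nlinarith [sq_nonneg (x j - 1/2)]
  have hwge : 0 ≤ x j * (1 - x j) / 2 := by nlinarith
  have key' : ∀ ε : ℝ, 0 < ε → |u x| ≤ (1/8) * M + ε := by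
    intro ε hε
    have hc : M < M + 8 * ε := by linarith
    have h1 := key_lemma d S lvl f u M hf hcont hdiff hzero heq j hjS 1 (Or.inl rfl)
      (M + 8*ε) hc x hx
    have h2 := key_lemma d S lvl f u M hf hcont hdiff hzero heq j hjS (-1) (Or.inr rfl)
      (M + 8*ε) hc x hx
    have hprod : (M + 8*ε) * (x j * (1 - x j) / 2) ≤ (M + 8*ε) * (1/8) :=
      mul_le_mul_of_nonneg_left hwle (by linarith)
    rw [abs_le]
    constructor <;> nlinarith
  exact le_of_forall_pos_le_add key'
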